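/- arXiv:quant-ph/0205033 — 2 statements merged into one kernel-verified Lean document; each statement's English description precedes it below -/
import Mathlib

section
/- Let ρ_A be a density matrix on ℂ^n, let ψ ∈ ℂ^n be a unit vector, and set ρ_B = |ψ⟩⟨ψ|. Let p = max{ q ∈ [0,1] : ρ_A − q ρ_B is positive semidefinite } (this maximum exists since the set is a nonempty closed subset of [0,1]). Then C(ρ_A, ρ_B) = √p. -/
open Matrix BigOperators
open scoped ComplexOrder

/-- A density matrix: positive semidefinite with trace 1. -/
def IsDensityMatrix {d : Type*} [Fintype d] [DecidableEq d]
    (ρ : Matrix d d ℂ) : Prop :=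
  ρ.PosSemidef ∧ ρ.trace = 1

/-- The compatibility `C(ρA, ρB)`: the supremum, over all finite families of density
matrices `σ` and weight vectors `p`, `q` (nonnegative, summing to 1) with
`∑ i, p i • σ i = ρA` and `∑ i, q i • σ i = ρB`, of the Bhattacharyya overlap
`∑ i, √(p i * q i)`. -/
noncomputable def compat {d : Type*} [Fintype d] [DecidableEq d]
    (ρA ρB : Matrix d d ℂ) : ℝ :=
  sSup { c : ℝ | ∃ (m : ℕ) (σ : Fin m → Matrix d d ℂ) (p q : Fin m → ℝ),
    (∀ i, IsDensityMatrix (σ i)) ∧ (∀ i, 0 ≤ p i) ∧ (∀ i, 0 ≤ q i) ∧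
    ∑ i, p i = 1 ∧ ∑ i, q i = 1 ∧
    ∑ i, p i • σ i = ρA ∧ ∑ i, q i • σ i = ρB ∧
    c = ∑ i, Real.sqrt (p i * q i) }

open scoped Classical in
/-- The positive semidefinite square root of a positive semidefinite matrix
(junk value `0` on non-PSD matrices). -/
noncomputable def psdSqrt {d : Type*} [Fintype d] [DecidableEq d]
    (A : Matrix d d ℂ) : Matrix d d ℂ :=
  if h : A.PosSemidef then
    (h.1.eigenvectorUnitary : Matrix d d ℂ) * diagonal ((↑) ∘ (√·) ∘ h.1.eigenvalues) *
      (star h.1.eigenvectorUnitary : Matrix d d ℂ)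
  else 0

/-- The fidelity `F(ρA, ρB) = Tr √(√ρA ρB √ρA)`. -/
noncomputable def fidelity {d : Type*} [Fintype d] [DecidableEq d]
    (ρA ρB : Matrix d d ℂ) : ℝ :=
  (psdSqrt (psdSqrt ρA * ρB * psdSqrt ρA)).trace.re

/-- The pure-state density matrix `|ψ⟩⟨ψ|` associated to a vector `ψ`. -/
def pureState {d : Type*} [Fintype d] [DecidableEq d] (ψ : d → ℂ) : Matrix d d ℂ :=
  Matrix.vecMulVec ψ (star ψ)

set_option linter.unusedSectionVars false
set_option maxHeartbeats 1000000

section Helpers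
variable {d : Type*} [Fintype d] [DecidableEq d]

omit [Fintype d] [DecidableEq d] in
lemma real_smul_eq (r : ℝ) (M : Matrix d d ℂ) : r • M = (r : ℂ) • M := by
  ext i j; simp [Complex.real_smul]

lemma psd_smul {r : ℝ} (hr : 0 ≤ r) {M : Matrix d d ℂ} (hM : M.PosSemidef) :
    (r • M).PosSemidef := by
  rw [real_smul_eq]
  refine Matrix.PosSemidef.of_dotProduct_mulVec_nonneg ?_ (fun x => ?_)
  · unfold Matrix.IsHermitian
    rw [conjTranspose_smul, hM.1.eq]
    congr 1
    simp [Complex.conj_ofReal]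
  · rw [smul_mulVec, dotProduct_smul, smul_eq_mul]
    exact mul_nonneg (by exact_mod_cast hr) (hM.dotProduct_mulVec_nonneg x)

lemma psd_sum {ι : Type*} {f : ι → Matrix d d ℂ} (s : Finset ι)
    (hf : ∀ i ∈ s, (f i).PosSemidef) : (∑ i ∈ s, f i).PosSemidef := by
  classical
  induction s using Finset.induction_on with
  | empty => simpa using Matrix.PosSemidef.zero
  | @insert a s' hx ih =>
    rw [Finset.sum_insert hx]
    have h1 := hf a (Finset.mem_insert_self a s')
    have h2 := ih (fun i hi => hf i (Finset.mem_insert_of_mem hi))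
    exact Matrix.PosSemidef.of_dotProduct_mulVec_nonneg (h1.1.add h2.1) (fun x => by
      rw [add_mulVec, dotProduct_add]; exact add_nonneg (h1.dotProduct_mulVec_nonneg x) (h2.dotProduct_mulVec_nonneg x))

lemma diag_entry_eq (M : Matrix d d ℂ) (i : d) :
    star (Pi.single i 1 : d → ℂ) ⬝ᵥ M *ᵥ (Pi.single i 1) = M i i := by
  simp [Matrix.mulVec_single, dotProduct, Pi.single_apply, apply_ite]

lemma psd_trace_zero {M : Matrix d d ℂ} (hM : M.PosSemidef) (h : M.trace = 0) :
    M = 0 := by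
  have hdiag : ∀ i, M i i = 0 := by
    have hnn : ∀ i ∈ Finset.univ, 0 ≤ M i i := fun i _ => by
      exact (diag_entry_eq M i) ▸ hM.dotProduct_mulVec_nonneg (Pi.single i 1)
    intro i
    exact (Finset.sum_eq_zero_iff_of_nonneg hnn).1 h i (Finset.mem_univ i)
  ext i j
  have hcol : M *ᵥ Pi.single j 1 = 0 := by
    rw [← hM.dotProduct_mulVec_zero_iff, diag_entry_eq]
    exact hdiag j
  have := congrFun hcol i
  simpa [Matrix.mulVec_single] using this

lemma pure_mulVec (ψ : d → ℂ) (x : d → ℂ) :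
    pureState ψ *ᵥ x = (star ψ ⬝ᵥ x) • ψ := by
  funext i
  simp [pureState, Matrix.vecMulVec, Matrix.mulVec, dotProduct, Finset.mul_sum,
    mul_comm, mul_assoc, mul_left_comm]

lemma pure_psd (ψ : d → ℂ) : (pureState ψ).PosSemidef := by
  refine Matrix.PosSemidef.of_dotProduct_mulVec_nonneg ?_ ?_
  · unfold Matrix.IsHermitian pureState
    ext i j
    simp [Matrix.vecMulVec, Matrix.conjTranspose_apply, mul_comm]
  · intro x
    rw [pure_mulVec, dotProduct_smul, smul_eq_mul]
    have h : star x ⬝ᵥ ψ = star (star ψ ⬝ᵥ x) := by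
      simp [dotProduct, Finset.sum_comm, mul_comm]
    rw [h]
    exact mul_star_self_nonneg _

lemma pure_trace (ψ : d → ℂ) : (pureState ψ).trace = star ψ ⬝ᵥ ψ := by
  simp [pureState, Matrix.trace, Matrix.diag, Matrix.vecMulVec, dotProduct, mul_comm]

lemma rank_one_dominance (ψ : d → ℂ) (hψ : star ψ ⬝ᵥ ψ = 1)
    {B : Matrix d d ℂ} (hB : B.PosSemidef) (hPB : (pureState ψ - B).PosSemidef) :
    B = (star ψ ⬝ᵥ B *ᵥ ψ) • pureState ψ := by
  have key : ∀ v : d → ℂ, star ψ ⬝ᵥ v = 0 → B *ᵥ v = 0 := by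
    intro v hv
    rw [← hB.dotProduct_mulVec_zero_iff]
    have h1 : star v ⬝ᵥ pureState ψ *ᵥ v = 0 := by
      rw [pure_mulVec, hv, zero_smul, dotProduct_zero]
    have h2 := hPB.dotProduct_mulVec_nonneg v
    rw [sub_mulVec, dotProduct_sub, h1, zero_sub, le_neg, neg_zero] at h2
    exact le_antisymm h2 (hB.dotProduct_mulVec_nonneg v)
  set c := star ψ ⬝ᵥ B *ᵥ ψ with hc
  have hBψ : B *ᵥ ψ = c • ψ := by
    set v := B *ᵥ ψ - c • ψ with hvdef
    have hv : star ψ ⬝ᵥ v = 0 := by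
      simp [hvdef, dotProduct_sub, dotProduct_smul, hψ, smul_eq_mul, ← hc]
    have hBv : B *ᵥ v = 0 := key v hv
    have hortho : star v ⬝ᵥ (B *ᵥ ψ) = 0 := by
      rw [dotProduct_mulVec]
      have : star v ᵥ* B = star (B *ᵥ v) := by
        rw [star_mulVec, hB.1.eq]
      rw [this, hBv, star_zero, zero_dotProduct]
    have hvψ : star v ⬝ᵥ ψ = 0 := by
      have : star v ⬝ᵥ ψ = star (star ψ ⬝ᵥ v) := by
        simp [dotProduct, mul_comm]
      rw [this, hv, star_zero]
    have hvv : star v ⬝ᵥ v = 0 := by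
      calc star v ⬝ᵥ v = star v ⬝ᵥ (B *ᵥ ψ) - c * (star v ⬝ᵥ ψ) := by
            rw [hvdef]; simp [dotProduct_sub, dotProduct_smul, smul_eq_mul]
        _ = 0 := by rw [hortho, hvψ]; ring
    have := dotProduct_star_self_eq_zero.mp hvv
    rw [hvdef] at this
    linear_combination (norm := module) this
  have hBx : ∀ x : d → ℂ, B *ᵥ x = (c • pureState ψ) *ᵥ x := by
    intro x
    have hperp : star ψ ⬝ᵥ (x - (star ψ ⬝ᵥ x) • ψ) = 0 := by
      simp [dotProduct_sub, dotProduct_smul, hψ, smul_eq_mul]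
    calc B *ᵥ x = B *ᵥ ((star ψ ⬝ᵥ x) • ψ + (x - (star ψ ⬝ᵥ x) • ψ)) := by
          rw [add_sub_cancel]
      _ = (star ψ ⬝ᵥ x) • (B *ᵥ ψ) + B *ᵥ (x - (star ψ ⬝ᵥ x) • ψ) := by
          rw [mulVec_add, mulVec_smul]
      _ = (star ψ ⬝ᵥ x) • (c • ψ) := by rw [hBψ, key _ hperp, add_zero]
      _ = (c • pureState ψ) *ᵥ x := by
          rw [smul_mulVec, pure_mulVec, smul_comm]
  ext i j
  have := congrFun (hBx (Pi.single j 1)) i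
  simpa [Matrix.mulVec_single] using this

end Helpers

/-- **Theorem 3.** When one of the two states is the pure state `|ψ⟩⟨ψ|`, the
compatibility equals `√p`, where `p` is the largest `q ∈ [0, 1]` such that
`ρA - q • |ψ⟩⟨ψ|` is positive semidefinite. -/
theorem compat_with_pure_state {n : ℕ}
    (ρA : Matrix (Fin n) (Fin n) ℂ) (hA : IsDensityMatrix ρA)
    (ψ : Fin n → ℂ) (hψ : star ψ ⬝ᵥ ψ = 1) (p : ℝ)
    (hp : IsGreatest {q : ℝ | q ∈ Set.Icc (0 : ℝ) 1 ∧
      (ρA - q • pureState ψ).PosSemidef} p) :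
    compat ρA (pureState ψ) = Real.sqrt p := by
  obtain ⟨⟨⟨hp0, hp1⟩, hpPSD⟩, hpmax⟩ := hp
  set P := pureState ψ with hP
  have hPd : IsDensityMatrix P := ⟨pure_psd ψ, by rw [hP, pure_trace, hψ]⟩
  -- the witness second state
  have ⟨τ, hτd, hτeq⟩ : ∃ τ : Matrix (Fin n) (Fin n) ℂ,
      IsDensityMatrix τ ∧ p • P + (1 - p) • τ = ρA := by
    rcases eq_or_lt_of_le hp1 with h1 | h1
    · refine ⟨P, hPd, ?_⟩
      have h0 : (ρA - p • P).trace = 0 := by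
        rw [Matrix.trace_sub, real_smul_eq, Matrix.trace_smul, hPd.2, hA.2, h1]
        simp
      have := psd_trace_zero hpPSD h0
      have hAP : ρA = p • P := by rwa [sub_eq_zero] at this
      rw [hAP, h1]
      simp
    · have hne : (1 : ℝ) - p ≠ 0 := sub_ne_zero.mpr (ne_of_lt h1).symm
      refine ⟨(1 - p)⁻¹ • (ρA - p • P), ⟨?_, ?_⟩, ?_⟩
      · exact psd_smul (inv_nonneg.mpr (by linarith)) hpPSD
      · rw [real_smul_eq, Matrix.trace_smul, Matrix.trace_sub, real_smul_eq p,
          Matrix.trace_smul, hPd.2, hA.2]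
        have hneC : ((1 : ℂ) - (p : ℂ)) ≠ 0 := by
          exact_mod_cast fun h => hne (by exact_mod_cast h)
        push_cast
        rw [smul_eq_mul, smul_eq_mul, mul_one]
        field_simp
      · rw [smul_smul, mul_inv_cancel₀ hne, one_smul]
        abel
  refine IsGreatest.csSup_eq ⟨?_, ?_⟩
  · -- membership: √p is attained
    refine ⟨2, ![P, τ], ![p, 1 - p], ![1, 0], ?_, ?_, ?_, ?_, ?_, ?_, ?_, ?_⟩
    · intro i
      fin_cases i
      · exact hPd
      · exact hτd
    · intro i
      fin_cases i
      · exact hp0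
      · simpa using by linarith
    · intro i
      fin_cases i
      · norm_num
      · norm_num
    · simp [Fin.sum_univ_two]
    · simp [Fin.sum_univ_two]
    · rw [Fin.sum_univ_two]; simpa using hτeq
    · rw [Fin.sum_univ_two]; simp
    · rw [Fin.sum_univ_two]; simp
  · -- upper bound
    rintro c ⟨m, σ, pv, q, hσd, hpv0, hq0, hpsum, hqsum, hpA, hqB, rfl⟩
    classical
    set T : Finset (Fin m) := Finset.univ.filter (fun i => 0 < q i) with hT
    have hσP : ∀ i ∈ T, σ i = P := by
      intro i hi
      have hqi : 0 < q i := (Finset.mem_filter.mp hi).2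
      have hrest : P - q i • σ i = ∑ j ∈ Finset.univ.erase i, q j • σ j := by
        have h := Finset.sum_erase_add Finset.univ (fun j => q j • σ j) (Finset.mem_univ i)
        rw [hqB] at h
        exact (eq_sub_of_add_eq h).symm
      have hPB : (P - q i • σ i).PosSemidef := by
        rw [hrest]
        exact psd_sum _ (fun j _ => psd_smul (hq0 j) (hσd j).1)
      have hBpsd : (q i • σ i).PosSemidef := psd_smul (hq0 i) (hσd i).1
      have hdom := rank_one_dominance ψ hψ hBpsd hPB
      set c' := star ψ ⬝ᵥ (q i • σ i) *ᵥ ψ with hc'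
      have htr : ((q i : ℂ)) = c' := by
        have h := congrArg Matrix.trace hdom
        rw [real_smul_eq, Matrix.trace_smul, Matrix.trace_smul, (hσd i).2,
          pure_trace, hψ] at h
        simpa using h
      have : q i • σ i = q i • P := by
        rw [hdom, ← htr, ← real_smul_eq]
      exact smul_right_injective (Matrix (Fin n) (Fin n) ℂ) (ne_of_gt hqi) this
    set s : ℝ := ∑ i ∈ T, pv i with hs
    have hs0 : 0 ≤ s := Finset.sum_nonneg (fun i _ => hpv0 i)
    have hs1 : s ≤ 1 := by
      rw [← hpsum]
      exact Finset.sum_le_sum_of_subset_of_nonneg (Finset.subset_univ T)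
        (fun i _ _ => hpv0 i)
    have hApsd : (ρA - s • P).PosSemidef := by
      have hsplit : ∑ i ∈ T, pv i • σ i + ∑ i ∈ Finset.univ.filter (fun i => ¬ 0 < q i),
          pv i • σ i = ρA := by
        rw [Finset.sum_filter_add_sum_filter_not]; exact hpA
      have hTP : ∑ i ∈ T, pv i • σ i = s • P := by
        rw [hs, Finset.sum_smul]
        exact Finset.sum_congr rfl (fun i hi => by rw [hσP i hi])
      have : ρA - s • P = ∑ i ∈ Finset.univ.filter (fun i => ¬ 0 < q i), pv i • σ i := by
        rw [← hsplit, hTP]; abel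
      rw [this]
      exact psd_sum _ (fun j _ => psd_smul (hpv0 j) (hσd j).1)
    have hsp : s ≤ p := hpmax ⟨⟨hs0, hs1⟩, hApsd⟩
    -- Cauchy-Schwarz bound
    have hzero : ∀ i ∉ T, Real.sqrt (pv i * q i) = 0 := by
      intro i hi
      have : q i = 0 := le_antisymm (not_lt.mp (by simpa [hT] using hi)) (hq0 i)
      rw [this, mul_zero, Real.sqrt_zero]
    have hcT : ∑ i, Real.sqrt (pv i * q i) = ∑ i ∈ T, Real.sqrt (pv i * q i) :=
      (Finset.sum_subset (Finset.subset_univ T) (fun i _ hi => hzero i hi)).symm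
    have hCS : (∑ i ∈ T, Real.sqrt (pv i * q i)) ^ 2 ≤ s * 1 := by
      have h1 : ∀ i ∈ T, Real.sqrt (pv i * q i) = Real.sqrt (pv i) * Real.sqrt (q i) :=
        fun i _ => Real.sqrt_mul (hpv0 i) _
      rw [Finset.sum_congr rfl h1]
      calc (∑ i ∈ T, Real.sqrt (pv i) * Real.sqrt (q i)) ^ 2
          ≤ (∑ i ∈ T, Real.sqrt (pv i) ^ 2) * ∑ i ∈ T, Real.sqrt (q i) ^ 2 :=
            Finset.sum_mul_sq_le_sq_mul_sq _ _ _
        _ ≤ s * 1 := by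
            have e1 : ∑ i ∈ T, Real.sqrt (pv i) ^ 2 = s :=
              Finset.sum_congr rfl (fun i _ => Real.sq_sqrt (hpv0 i))
            have e2 : ∑ i ∈ T, Real.sqrt (q i) ^ 2 ≤ 1 := by
              rw [Finset.sum_congr rfl (fun i _ => Real.sq_sqrt (hq0 i))]
              rw [← hqsum]
              exact Finset.sum_le_sum_of_subset_of_nonneg (Finset.subset_univ T)
                (fun i _ _ => hq0 i)
            rw [e1]
            exact mul_le_mul_of_nonneg_left e2 hs0
    have hcnn : 0 ≤ ∑ i, Real.sqrt (pv i * q i) :=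
      Finset.sum_nonneg (fun i _ => Real.sqrt_nonneg _)
    rw [hcT]
    have h2 : (∑ i ∈ T, Real.sqrt (pv i * q i)) ^ 2 ≤ p := by
      calc _ ≤ s * 1 := hCS
        _ ≤ p := by rwa [mul_one]
    calc ∑ i ∈ T, Real.sqrt (pv i * q i)
        = Real.sqrt ((∑ i ∈ T, Real.sqrt (pv i * q i)) ^ 2) :=
          (Real.sqrt_sq (hcT ▸ hcnn)).symm
      _ ≤ Real.sqrt p := Real.sqrt_le_sqrt h2
end

section
/- Let ρ_A and ρ_B be density matrices on ℂ^n. Then C(ρ_A, ρ_B) = 1 if and only if ρ_A = ρ_B. -/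
open Matrix BigOperators
open scoped ComplexOrder

private lemma diag_nonneg_aux {n : ℕ} {σ : Matrix (Fin n) (Fin n) ℂ} (h : σ.PosSemidef)
    (j : Fin n) : 0 ≤ σ j j := by
  exact h.diag_nonneg

private lemma entry_abs_le_sqrt {n : ℕ} {σ : Matrix (Fin n) (Fin n) ℂ} (h : σ.PosSemidef)
    (j k : Fin n) :
    ‖σ j k‖ ≤ Real.sqrt (σ j j).re * Real.sqrt (σ k k).re := by
  obtain ⟨S, hmul⟩ : ∃ S : Matrix (Fin n) (Fin n) ℂ, star S * S = σ := by
    open scoped Matrix.Norms.L2Operator MatrixOrder in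
    obtain ⟨B, hB⟩ := CStarAlgebra.nonneg_iff_eq_star_mul_self.mp
      h.nonneg
    exact ⟨B, hB.symm⟩
  let col : Fin n → EuclideanSpace ℂ (Fin n) := fun a => WithLp.toLp 2 (fun l => S l a)
  have key : ∀ a b : Fin n, (inner ℂ (col a) (col b) : ℂ) = σ a b := by
    intro a b
    rw [← hmul]
    simp only [PiLp.inner_apply, RCLike.inner_apply, Matrix.mul_apply]
    apply Finset.sum_congr rfl
    intro l _
    simp [col, Matrix.star_apply, mul_comm]
  have h1 : ‖σ j k‖ = ‖(inner ℂ (col j) (col k) : ℂ)‖ := by rw [key j k]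
  have h2 : ‖(inner ℂ (col j) (col k) : ℂ)‖ ≤ ‖col j‖ * ‖col k‖ := norm_inner_le_norm _ _
  have h3 : ‖col j‖ = Real.sqrt (σ j j).re := by
    rw [@norm_eq_sqrt_re_inner ℂ, key j j]; rfl
  have h4 : ‖col k‖ = Real.sqrt (σ k k).re := by
    rw [@norm_eq_sqrt_re_inner ℂ, key k k]; rfl
  rw [h1, ← h3, ← h4]; exact h2

private lemma entry_abs_le_one {n : ℕ} {σ : Matrix (Fin n) (Fin n) ℂ}
    (h : IsDensityMatrix σ) (j k : Fin n) : ‖σ j k‖ ≤ 1 := by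
  obtain ⟨hpsd, htr⟩ := h
  have hre : ∀ l, 0 ≤ (σ l l).re := fun l => (Complex.le_def.mp (diag_nonneg_aux hpsd l)).1
  have hsum : ∑ l, (σ l l).re = 1 := by
    have : (σ.trace).re = 1 := by rw [htr]; simp
    rw [← this]
    simp [Matrix.trace, Matrix.diag, Complex.re_sum]
  have hdle : ∀ l, (σ l l).re ≤ 1 := by
    intro l
    rw [← hsum]
    exact Finset.single_le_sum (fun i _ => hre i) (Finset.mem_univ l)
  calc ‖σ j k‖ ≤ Real.sqrt (σ j j).re * Real.sqrt (σ k k).re :=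
        entry_abs_le_sqrt hpsd j k
    _ ≤ 1 * 1 :=
        mul_le_mul (Real.sqrt_le_one.mpr (hdle _)) (Real.sqrt_le_one.mpr (hdle _))
          (Real.sqrt_nonneg _) zero_le_one
    _ = 1 := by norm_num

open scoped Classical in
/-- **P5.** The compatibility equals `1` exactly when the two density matrices
coincide. -/
theorem compat_eq_one_iff {n : ℕ}
    (ρA ρB : Matrix (Fin n) (Fin n) ℂ)
    (hA : IsDensityMatrix ρA) (hB : IsDensityMatrix ρB) :
    compat ρA ρB = 1 ↔ ρA = ρB := by
  set T := { c : ℝ | ∃ (m : ℕ) (σ : Fin m → Matrix (Fin n) (Fin n) ℂ) (p q : Fin m → ℝ),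
    (∀ i, IsDensityMatrix (σ i)) ∧ (∀ i, 0 ≤ p i) ∧ (∀ i, 0 ≤ q i) ∧
    ∑ i, p i = 1 ∧ ∑ i, q i = 1 ∧
    ∑ i, p i • σ i = ρA ∧ ∑ i, q i • σ i = ρB ∧
    c = ∑ i, Real.sqrt (p i * q i) } with hT
  have hcompat : compat ρA ρB = sSup T := rfl
  -- every element of T is at most 1
  have hub : ∀ c ∈ T, c ≤ 1 := by
    rintro c ⟨m, σ, p, q, hσ, hp, hq, hps, hqs, hPA, hQB, hceq⟩
    rw [hceq]
    calc ∑ i, Real.sqrt (p i * q i) ≤ ∑ i, (p i + q i) / 2 := by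
          apply Finset.sum_le_sum
          intro i _
          have hs := Real.sq_sqrt (mul_nonneg (hp i) (hq i))
          have hnn := Real.sqrt_nonneg (p i * q i)
          nlinarith [hp i, hq i, sq_nonneg (p i - q i),
            sq_nonneg (Real.sqrt (p i * q i) - (p i + q i) / 2)]
      _ = (∑ i, p i + ∑ i, q i) / 2 := by
          rw [← Finset.sum_add_distrib, Finset.sum_div]
      _ = 1 := by rw [hps, hqs]; norm_num
  have hne : T.Nonempty := by
    refine ⟨0, 2, ![ρA, ρB], ![1, 0], ![0, 1], ?_, ?_, ?_, ?_, ?_, ?_, ?_, ?_⟩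
    · intro i; fin_cases i <;> assumption
    · intro i; fin_cases i <;> norm_num
    · intro i; fin_cases i <;> norm_num
    · simp [Fin.sum_univ_two]
    · simp [Fin.sum_univ_two]
    · simp [Fin.sum_univ_two]
    · simp [Fin.sum_univ_two]
    · simp [Fin.sum_univ_two]
  constructor
  · -- forward direction
    intro hc
    rw [hcompat] at hc
    ext j k
    have habs : ∀ ε > (0:ℝ), ‖ρA j k - ρB j k‖ ≤ ε := by
      intro ε hε
      have hδ : (0:ℝ) < ε ^ 2 / 8 := by positivity
      have hlt : 1 - ε ^ 2 / 8 < sSup T := by rw [hc]; linarith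
      obtain ⟨c, hcT, hclt⟩ := exists_lt_of_lt_csSup hne hlt
      have hc1 : c ≤ 1 := hub c hcT
      obtain ⟨m, σ, p, q, hσ, hp, hq, hps, hqs, hPA, hQB, hceq⟩ := hcT
      -- Hellinger-type identities
      have e1 : ∑ i, (Real.sqrt (p i) - Real.sqrt (q i)) ^ 2 = 2 - 2 * c := by
        have key : ∀ i, (Real.sqrt (p i) - Real.sqrt (q i)) ^ 2
            = p i + q i - 2 * Real.sqrt (p i * q i) := by
          intro i
          rw [sub_sq, Real.sq_sqrt (hp i), Real.sq_sqrt (hq i), Real.sqrt_mul (hp i)]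
          ring
        rw [Finset.sum_congr rfl fun i _ => key i]
        rw [Finset.sum_sub_distrib, Finset.sum_add_distrib, ← Finset.mul_sum,
          hps, hqs, ← hceq]
        ring
      have e2 : ∑ i, (Real.sqrt (p i) + Real.sqrt (q i)) ^ 2 = 2 + 2 * c := by
        have key : ∀ i, (Real.sqrt (p i) + Real.sqrt (q i)) ^ 2
            = p i + q i + 2 * Real.sqrt (p i * q i) := by
          intro i
          rw [add_sq, Real.sq_sqrt (hp i), Real.sq_sqrt (hq i), Real.sqrt_mul (hp i)]
          ring
        rw [Finset.sum_congr rfl fun i _ => key i]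
        rw [Finset.sum_add_distrib, Finset.sum_add_distrib, ← Finset.mul_sum,
          hps, hqs, ← hceq]
        ring
      have e3 : (∑ i, |p i - q i|) ^ 2 ≤ (2 - 2 * c) * (2 + 2 * c) := by
        rw [← e1, ← e2]
        apply Finset.sum_sq_le_sum_mul_sum_of_sq_eq_mul
        · exact fun i _ => sq_nonneg _
        · exact fun i _ => sq_nonneg _
        · intro i _
          rw [sq_abs]
          have hpq : p i - q i
              = (Real.sqrt (p i) - Real.sqrt (q i)) * (Real.sqrt (p i) + Real.sqrt (q i)) := by
            have h' : (Real.sqrt (p i) - Real.sqrt (q i)) * (Real.sqrt (p i) + Real.sqrt (q i))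
                = Real.sqrt (p i) ^ 2 - Real.sqrt (q i) ^ 2 := by ring
            rw [h', Real.sq_sqrt (hp i), Real.sq_sqrt (hq i)]
          rw [← mul_pow, ← hpq]
      have nn : (0:ℝ) ≤ ∑ i, |p i - q i| :=
        Finset.sum_nonneg fun i _ => abs_nonneg _
      have e4 : ∑ i, |p i - q i| ≤ ε := by
        have hsq : (∑ i, |p i - q i|) ^ 2 ≤ ε ^ 2 := by nlinarith
        nlinarith
      -- decompose the matrix entries
      have e5 : ρA j k - ρB j k = ∑ i, ((p i - q i : ℝ) : ℂ) * σ i j k := by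
        rw [← hPA, ← hQB]
        simp only [Matrix.sum_apply, Matrix.smul_apply, smul_eq_mul, Complex.real_smul,
          ← Finset.sum_sub_distrib]
        apply Finset.sum_congr rfl
        intro i _
        push_cast
        ring
      calc ‖ρA j k - ρB j k‖
          = ‖∑ i, ((p i - q i : ℝ) : ℂ) * σ i j k‖ := by rw [e5]
        _ ≤ ∑ i, ‖((p i - q i : ℝ) : ℂ) * σ i j k‖ :=
            norm_sum_le _ _
        _ = ∑ i, |p i - q i| * ‖σ i j k‖ := by
            apply Finset.sum_congr rfl
            intro i _
            rw [norm_mul, Complex.norm_real, Real.norm_eq_abs]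
        _ ≤ ∑ i, |p i - q i| * 1 := by
            apply Finset.sum_le_sum
            intro i _
            exact mul_le_mul_of_nonneg_left (entry_abs_le_one (hσ i) j k) (abs_nonneg _)
        _ = ∑ i, |p i - q i| := by simp
        _ ≤ ε := e4
    have h0 : ‖ρA j k - ρB j k‖ ≤ 0 := by
      apply le_of_forall_pos_le_add
      intro ε hε
      simpa using habs ε hε
    have : ρA j k - ρB j k = 0 := by
      have := le_antisymm h0 (norm_nonneg _)
      exact norm_eq_zero.mp this
    exact sub_eq_zero.mp this
  · intro he
    subst he
    have mem1 : (1:ℝ) ∈ T := by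
      refine ⟨1, fun _ => ρA, fun _ => 1, fun _ => 1, fun _ => hA, fun _ => zero_le_one,
        fun _ => zero_le_one, by simp, by simp, by simp, by simp, by simp⟩
    rw [hcompat]
    exact le_antisymm (csSup_le hne hub) (le_csSup ⟨1, hub⟩ mem1)
end
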